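/- Let G be a finite group acting transitively on a finite set X with only one orbit, U a projective unitary representation of G on a finite-dimensional Hilbert space H, and suppose the restriction of U to the stability subgroup H_X of a base point is irreducible. Then any covariant POVM solution M (satisfying M_{gx} = U(g) M_x U(g)*) has M_x = k·1 for some k ≥ 0, the same for every x. -/

import Mathlib

open ContinuousLinearMap
noncomputable section

/-- If `G` acts transitively on `X`, `U` is a projective unitary
representation whose restriction to the stabilizer of a base point `x₀` is irreducible,
then any covariant POVM is trivial: `M x = k • 1` with `k ≥ 0` independent of `x`. -/
theorem covariant_povm_trivial_of_irreducible_stabilizer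
    {G X H : Type*} [Group G] [Fintype G] [Fintype X] [MulAction G X]
    [MulAction.IsPretransitive G X]
    [NormedAddCommGroup H] [InnerProductSpace ℂ H] [FiniteDimensional ℂ H]
    (x₀ : X)
    (U : G → (H →L[ℂ] H)) (m : G → G → ℂ)
    (hUnit : ∀ g, adjoint (U g) ∘L U g = 1 ∧ U g ∘L adjoint (U g) = 1)
    (hm : ∀ g h, ‖m g h‖ = 1)
    (hproj : ∀ g h, U (g * h) = m g h • (U g ∘L U h))
    (hirr : ∀ W : Submodule ℂ H,
      (∀ h : G, h • x₀ = x₀ → ∀ v ∈ W, U h v ∈ W) → W = ⊥ ∨ W = ⊤)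
    (M : X → (H →L[ℂ] H))
    (hpos : ∀ x, (M x).IsPositive)
    (hnorm : ∑ x, M x = 1)
    (hcov : ∀ (g : G) (x : X), M (g • x) = U g ∘L M x ∘L adjoint (U g)) :
    ∃ k : ℝ, 0 ≤ k ∧ ∀ x : X, M x = (k : ℂ) • (1 : H →L[ℂ] H) := by
  rcases subsingleton_or_nontrivial H with hsub | hnt
  · exact ⟨0, le_refl 0, fun x => by ext v; exact Subsingleton.elim _ _⟩
  -- M x₀ commutes with U h for h in the stabilizer
  have hcomm : ∀ h : G, h • x₀ = x₀ → ∀ w : H, U h (M x₀ w) = M x₀ (U h w) := by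
    intro h hh w
    have h1 : M x₀ = U h ∘L M x₀ ∘L adjoint (U h) := by
      conv_lhs => rw [← hh, hcov]
    have e1 : adjoint (U h) (U h w) = w := by
      have := congrArg (fun S : H →L[ℂ] H => S w) (hUnit h).1
      simpa using this
    calc U h ((M x₀) w) = U h ((M x₀) (adjoint (U h) (U h w))) := by rw [e1]
      _ = (U h ∘L M x₀ ∘L adjoint (U h)) (U h w) := rfl
      _ = M x₀ (U h w) := by rw [← h1]
  -- M x₀ has an eigenvalue c
  obtain ⟨c, hc⟩ := Module.End.exists_eigenvalue (↑(M x₀) : Module.End ℂ H)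
  have hinv : ∀ h : G, h • x₀ = x₀ →
      ∀ v ∈ Module.End.eigenspace (↑(M x₀) : Module.End ℂ H) c, U h v ∈
        Module.End.eigenspace (↑(M x₀) : Module.End ℂ H) c := by
    intro h hh v hv
    rw [Module.End.mem_eigenspace_iff] at hv ⊢
    have hv' : M x₀ v = c • v := hv
    show M x₀ (U h v) = c • U h v
    rw [← hcomm h hh v, hv', map_smul]
  have hWtop : Module.End.eigenspace (↑(M x₀) : Module.End ℂ H) c = ⊤ := by
    rcases hirr _ hinv with hbot | htop
    · exact absurd hbot hc
    · exact htop
  have hTv : ∀ v : H, M x₀ v = c • v := by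
    intro v
    have hv : v ∈ Module.End.eigenspace (↑(M x₀) : Module.End ℂ H) c :=
      hWtop ▸ Submodule.mem_top
    exact Module.End.mem_eigenspace_iff.mp hv
  -- c is a nonnegative real
  obtain ⟨v, hv⟩ := exists_ne (0 : H)
  have hvn : ((‖v‖ : ℂ)) ^ 2 ≠ 0 := by
    simp [hv, norm_eq_zero]
  have hinner : (inner ℂ (M x₀ v) v : ℂ) = (starRingEnd ℂ) c * (‖v‖ : ℂ) ^ 2 := by
    rw [hTv v, inner_smul_left, inner_self_eq_norm_sq_to_K]; norm_cast
  have hinner2 : (inner ℂ v (M x₀ v) : ℂ) = c * (‖v‖ : ℂ) ^ 2 := by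
    rw [hTv v, inner_smul_right, inner_self_eq_norm_sq_to_K]; norm_cast
  have hsa : (inner ℂ (M x₀ v) v : ℂ) = (inner ℂ v (M x₀ v) : ℂ) :=
    (hpos x₀).isSelfAdjoint.isSymmetric v v
  have hcreal : (starRingEnd ℂ) c = c := by
    have h2 := hsa
    rw [hinner, hinner2] at h2
    exact mul_right_cancel₀ hvn h2
  have hcc : (c.re : ℂ) = c := by
    exact Complex.conj_eq_iff_re.mp hcreal
  have hcnn : 0 ≤ c.re := by
    have h0 : 0 ≤ Complex.re (inner ℂ (M x₀ v) v : ℂ) := (Complex.nonneg_iff.mp ((hpos x₀).inner_nonneg_left v)).1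
    rw [hinner, hcreal] at h0
    have hre : (c * (‖v‖ : ℂ) ^ 2).re = c.re * ‖v‖ ^ 2 := by
      have h4 : ((‖v‖ : ℂ)) ^ 2 = ((‖v‖ ^ 2 : ℝ) : ℂ) := by norm_cast
      rw [h4, Complex.mul_re, Complex.ofReal_re, Complex.ofReal_im]
      ring
    rw [hre] at h0
    have hv2 : (0 : ℝ) < ‖v‖ ^ 2 := by
      have : ‖v‖ ≠ 0 := norm_ne_zero_iff.mpr hv
      positivity
    nlinarith
  refine ⟨c.re, hcnn, fun x => ?_⟩
  obtain ⟨g, hg⟩ := MulAction.exists_smul_eq G x₀ x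
  have hTx : M x₀ = (c : ℂ) • (1 : H →L[ℂ] H) := by
    ext w; simpa using hTv w
  rw [← hg, hcov, hTx, hcc]
  ext w
  have h2 : U g (adjoint (U g) w) = w := by
    have := congrArg (fun S : H →L[ℂ] H => S w) (hUnit g).2
    simpa using this
  simp only [comp_apply, smul_apply, ContinuousLinearMap.one_apply, map_smul, h2]
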